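/- Rank-one reduction of the regularity radius: if Δ = uvᵀ with u, v ∈ ℝⁿ having all entries positive, then d(A, uvᵀ) = d(D_u⁻¹ A D_v⁻¹, eeᵀ), where D_u and D_v are the diagonal matrices with diagonals u and v. -/

import Mathlib

open Matrix
open scoped ENNReal NNReal

noncomputable def regRad {n : ℕ} (A Δ : Matrix (Fin n) (Fin n) ℝ) : ℝ≥0∞ :=
  ⨅ δ ∈ {δ : ℝ≥0 | ∃ M : Matrix (Fin n) (Fin n) ℝ,
      (∀ i j, |M i j - A i j| ≤ (δ : ℝ) * Δ i j) ∧ M.det = 0},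
    (δ : ℝ≥0∞)

theorem regRad_rank_one_reduction {n : ℕ} (A : Matrix (Fin n) (Fin n) ℝ)
    (u v : Fin n → ℝ) (hu : ∀ i, 0 < u i) (hv : ∀ i, 0 < v i) :
    regRad A (Matrix.vecMulVec u v)
      = regRad ((Matrix.diagonal u)⁻¹ * A * (Matrix.diagonal v)⁻¹)
        (Matrix.of fun _ _ => (1 : ℝ)) := by
  have hDu : (Matrix.diagonal u)⁻¹ = Matrix.diagonal (fun i => (u i)⁻¹) := by
    apply Matrix.inv_eq_right_inv
    ext i j
    by_cases h : i = j
    · subst h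
      simp [Matrix.diagonal_mul_diagonal, Matrix.diagonal_apply, Matrix.one_apply,
        mul_inv_cancel₀ (hu i).ne']
    · simp [Matrix.diagonal_mul_diagonal, Matrix.diagonal_apply, Matrix.one_apply, h]
  have hDv : (Matrix.diagonal v)⁻¹ = Matrix.diagonal (fun i => (v i)⁻¹) := by
    apply Matrix.inv_eq_right_inv
    ext i j
    by_cases h : i = j
    · subst h
      simp [Matrix.diagonal_mul_diagonal, Matrix.diagonal_apply, Matrix.one_apply,
        mul_inv_cancel₀ (hv i).ne']
    · simp [Matrix.diagonal_mul_diagonal, Matrix.diagonal_apply, Matrix.one_apply, h]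
  have hB : ∀ i j, ((Matrix.diagonal u)⁻¹ * A * (Matrix.diagonal v)⁻¹) i j
      = (u i)⁻¹ * A i j * (v j)⁻¹ := by
    intro i j
    rw [hDu, hDv]
    simp [Matrix.mul_diagonal, Matrix.diagonal_mul]
  have hprod_u : (∏ i, u i) ≠ 0 := Finset.prod_ne_zero_iff.2 fun i _ => (hu i).ne'
  have hprod_v : (∏ i, v i) ≠ 0 := Finset.prod_ne_zero_iff.2 fun i _ => (hv i).ne'
  unfold regRad
  refine iInf_congr fun δ => ?_
  refine iInf_congr_Prop ?_ (fun _ => rfl)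
  constructor
  · rintro ⟨M, hM, hdet⟩
    refine ⟨(Matrix.diagonal u)⁻¹ * M * (Matrix.diagonal v)⁻¹, ?_, ?_⟩
    · intro i j
      have hMij : ((Matrix.diagonal u)⁻¹ * M * (Matrix.diagonal v)⁻¹) i j
          = (u i)⁻¹ * M i j * (v j)⁻¹ := by
        rw [hDu, hDv]
        simp [Matrix.mul_diagonal, Matrix.diagonal_mul]
      rw [hMij, hB]
      have h := hM i j
      rw [Matrix.vecMulVec_apply] at h
      have key : (u i)⁻¹ * M i j * (v j)⁻¹ - (u i)⁻¹ * A i j * (v j)⁻¹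
          = (u i)⁻¹ * (v j)⁻¹ * (M i j - A i j) := by ring
      rw [key, abs_mul, abs_mul, abs_of_pos (inv_pos.2 (hu i)), abs_of_pos (inv_pos.2 (hv j))]
      calc (u i)⁻¹ * (v j)⁻¹ * |M i j - A i j|
          ≤ (u i)⁻¹ * (v j)⁻¹ * ((δ : ℝ) * (u i * v j)) := by
            apply mul_le_mul_of_nonneg_left h
            have h1 := hu i; have h2 := hv j; positivity
        _ = (δ : ℝ) * 1 := by
            have h1 : u i ≠ 0 := (hu i).ne'
            have h2 : v j ≠ 0 := (hv j).ne'
            field_simp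
        _ = (δ : ℝ) * Matrix.of (fun _ _ => (1:ℝ)) i j := by simp
    · rw [hDu, hDv]
      simp [Matrix.det_mul, Matrix.det_diagonal, hdet]
  · rintro ⟨N, hN, hdet⟩
    refine ⟨Matrix.diagonal u * N * Matrix.diagonal v, ?_, ?_⟩
    · intro i j
      have hNij : (Matrix.diagonal u * N * Matrix.diagonal v) i j = u i * N i j * v j := by
        simp [Matrix.mul_diagonal, Matrix.diagonal_mul]
      rw [hNij, Matrix.vecMulVec_apply]
      have h := hN i j
      rw [hB] at h
      simp only [Matrix.of_apply, mul_one] at h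
      have hA : A i j = u i * ((u i)⁻¹ * A i j * (v j)⁻¹) * v j := by
        have h1 : u i ≠ 0 := (hu i).ne'
        have h2 : v j ≠ 0 := (hv j).ne'
        field_simp
      rw [hA]
      have key : u i * N i j * v j - u i * ((u i)⁻¹ * A i j * (v j)⁻¹) * v j
          = u i * v j * (N i j - (u i)⁻¹ * A i j * (v j)⁻¹) := by ring
      rw [key, abs_mul, abs_mul, abs_of_pos (hu i), abs_of_pos (hv j)]
      calc u i * v j * |N i j - (u i)⁻¹ * A i j * (v j)⁻¹|
          ≤ u i * v j * (δ : ℝ) := by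
            apply mul_le_mul_of_nonneg_left h
            have h1 := hu i; have h2 := hv j; positivity
        _ = (δ : ℝ) * (u i * v j) := by ring
    · simp [Matrix.det_mul, Matrix.det_diagonal, hdet]
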